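/- arXiv:2104.01892 — 5 statements merged into one kernel-verified Lean document; each statement's English description precedes it below -/
import Mathlib

section
/- If a framework (G, p̂) in ℝ^D is globally rigid, then its orthogonal projection (G, p) onto a coordinate subspace ℝ^d (d ≤ D) is globally rigid in ℝ^d. -/
/-- Orthogonal projection of `ℝ^D` onto the coordinate subspace `ℝ^d` (first `d` coordinates). -/
def proj {d D : ℕ} (h : d ≤ D) (x : EuclideanSpace ℝ (Fin D)) : EuclideanSpace ℝ (Fin d) :=
  WithLp.toLp 2 (fun k => x (Fin.castLE h k))

/-- Frameworks are equivalent: same edge lengths. -/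
def FrameworkEquiv {V : Type*} {d D : ℕ} (G : SimpleGraph V)
    (p : V → EuclideanSpace ℝ (Fin d)) (q : V → EuclideanSpace ℝ (Fin D)) : Prop :=
  ∀ i j, G.Adj i j → dist (p i) (p j) = dist (q i) (q j)

/-- Frameworks are congruent: same distances for all pairs of vertices. -/
def FrameworkCongruent {V : Type*} {d D : ℕ}
    (p : V → EuclideanSpace ℝ (Fin d)) (q : V → EuclideanSpace ℝ (Fin D)) : Prop :=
  ∀ i j, dist (p i) (p j) = dist (q i) (q j)

/-- Global rigidity of `(G, p)` in `ℝ^d`. -/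
def GloballyRigid {V : Type*} {d : ℕ} (G : SimpleGraph V)
    (p : V → EuclideanSpace ℝ (Fin d)) : Prop :=
  ∀ q : V → EuclideanSpace ℝ (Fin d), FrameworkEquiv G p q → FrameworkCongruent p q

lemma dist_sq_split {d D : ℕ} (h : d ≤ D) (x y : EuclideanSpace ℝ (Fin D)) :
    dist x y ^ 2 = dist (proj h x) (proj h y) ^ 2 +
      ∑ k ∈ Finset.univ.filter (fun k : Fin D => ¬ k.val < d), (x k - y k) ^ 2 := by
  have hx : dist x y ^ 2 = ∑ k : Fin D, (x k - y k) ^ 2 := by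
    rw [EuclideanSpace.dist_eq, Real.sq_sqrt (by positivity)]
    simp [Real.dist_eq, sq_abs]
  have hp : dist (proj h x) (proj h y) ^ 2
      = ∑ k : Fin d, (x (Fin.castLE h k) - y (Fin.castLE h k)) ^ 2 := by
    rw [EuclideanSpace.dist_eq, Real.sq_sqrt (by positivity)]
    simp [Real.dist_eq, sq_abs, proj]
  have hsplit : (∑ k : Fin D, (x k - y k) ^ 2) =
      (∑ k ∈ Finset.univ.filter (fun k : Fin D => k.val < d), (x k - y k) ^ 2) +
      ∑ k ∈ Finset.univ.filter (fun k : Fin D => ¬ k.val < d), (x k - y k) ^ 2 :=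
    (Finset.sum_filter_add_sum_filter_not _ _ _).symm
  have himg : Finset.univ.filter (fun k : Fin D => k.val < d)
      = Finset.univ.image (Fin.castLE h) := by
    ext k
    simp only [Finset.mem_filter, Finset.mem_image, Finset.mem_univ, true_and]
    constructor
    · intro hk; exact ⟨⟨k.val, hk⟩, Fin.ext rfl⟩
    · rintro ⟨j, rfl⟩; exact j.isLt
  have hhead : (∑ k ∈ Finset.univ.filter (fun k : Fin D => k.val < d), (x k - y k) ^ 2)
      = ∑ k : Fin d, (x (Fin.castLE h k) - y (Fin.castLE h k)) ^ 2 := by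
    rw [himg, Finset.sum_image (fun a _ b _ hab => Fin.castLE_injective h hab)]
  rw [hx, hsplit, hhead, hp]

/-- If a framework `(G, p̂)` in `ℝ^D` is globally rigid, then its orthogonal projection onto the
coordinate subspace `ℝ^d` (`d ≤ D`) is globally rigid in `ℝ^d`. -/
theorem globallyRigid_of_projection {V : Type*} {d D : ℕ} (h : d ≤ D) (G : SimpleGraph V)
    (phat : V → EuclideanSpace ℝ (Fin D)) (hGR : GloballyRigid G phat) :
    GloballyRigid G (fun i => proj h (phat i)) := by
  intro q hEq
  set lift : V → EuclideanSpace ℝ (Fin D) := fun i => WithLp.toLp 2 (fun k =>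
    if hk : k.val < d then q i ⟨k.val, hk⟩ else phat i k) with hlift
  have hproj : ∀ i, proj h (lift i) = q i := by
    intro i; ext k
    simp [proj, lift, k.isLt]
  have htail : ∀ i j, (∑ k ∈ Finset.univ.filter (fun k : Fin D => ¬ k.val < d),
      (lift i k - lift j k) ^ 2)
      = ∑ k ∈ Finset.univ.filter (fun k : Fin D => ¬ k.val < d), (phat i k - phat j k) ^ 2 := by
    intro i j
    refine Finset.sum_congr rfl fun k hk => ?_
    have hk' : ¬ k.val < d := (Finset.mem_filter.mp hk).2
    simp [lift, hk']
  have key : ∀ i j, dist (phat i) (phat j) = dist (lift i) (lift j) ↔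
      dist (proj h (phat i)) (proj h (phat j)) = dist (q i) (q j) := by
    intro i j
    have h1 := dist_sq_split h (phat i) (phat j)
    have h2 := dist_sq_split h (lift i) (lift j)
    rw [htail i j, hproj i, hproj j] at h2
    constructor
    · intro he
      have : dist (proj h (phat i)) (proj h (phat j)) ^ 2 = dist (q i) (q j) ^ 2 := by
        have := h1.symm.trans (he ▸ h2)
        linarith
      have := congrArg Real.sqrt this
      simpa [Real.sqrt_sq dist_nonneg] using this
    · intro he
      have : dist (phat i) (phat j) ^ 2 = dist (lift i) (lift j) ^ 2 := by
        rw [h1, h2, he]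
      have := congrArg Real.sqrt this
      simpa [Real.sqrt_sq dist_nonneg] using this
  have hEq' : FrameworkEquiv G phat lift := fun i j hij =>
    (key i j).mpr (hEq i j hij)
  intro i j
  exact (key i j).mp (hGR lift hEq' i j)
end

section
/- If a framework (G, p̂) in ℝ^D is universally rigid, then its orthogonal projection (G, p) onto ℝ^d (d ≤ D) is universally rigid in ℝ^d. -/
/-- Universal rigidity of `(G, p)` in `ℝ^d`: every equivalent framework in any `ℝ^D`, `D ≥ d`,
is congruent to `(G, p)`. -/
def UniversallyRigid {V : Type*} {d : ℕ} (G : SimpleGraph V)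
    (p : V → EuclideanSpace ℝ (Fin d)) : Prop :=
  ∀ D : ℕ, d ≤ D → ∀ q : V → EuclideanSpace ℝ (Fin D),
    FrameworkEquiv G p q → FrameworkCongruent p q

lemma dist_sq_eq {n : ℕ} (x y : EuclideanSpace ℝ (Fin n)) :
    dist x y ^ 2 = ∑ k, (x k - y k) ^ 2 := by
  rw [EuclideanSpace.dist_eq, Real.sq_sqrt (Finset.sum_nonneg fun _ _ => sq_nonneg _)]
  simp [Real.dist_eq, sq_abs]

lemma dist_split {d D : ℕ} (h : d ≤ D) (x y : EuclideanSpace ℝ (Fin D)) :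
    dist x y ^ 2 = dist (proj h x) (proj h y) ^ 2 +
      ∑ k : Fin (D - d), (x (Fin.cast (Nat.add_sub_cancel' h) (Fin.natAdd d k))
        - y (Fin.cast (Nat.add_sub_cancel' h) (Fin.natAdd d k))) ^ 2 := by
  rw [dist_sq_eq, dist_sq_eq]
  rw [← Fintype.sum_equiv (finCongr (Nat.add_sub_cancel' h))
    (fun k : Fin (d + (D - d)) => (x (Fin.cast (Nat.add_sub_cancel' h) k)
      - y (Fin.cast (Nat.add_sub_cancel' h) k)) ^ 2)
    (fun k : Fin D => (x k - y k) ^ 2) (fun k => rfl)]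
  rw [Fin.sum_univ_add]
  rfl

lemma dist_append {a b : ℕ} (x y : EuclideanSpace ℝ (Fin a)) (u v : Fin b → ℝ) :
    dist (WithLp.toLp 2 (Fin.append x u) : EuclideanSpace ℝ (Fin (a + b)))
      (WithLp.toLp 2 (Fin.append y v) : EuclideanSpace ℝ (Fin (a + b))) ^ 2
      = dist x y ^ 2 + ∑ k, (u k - v k) ^ 2 := by
  rw [dist_sq_eq, dist_sq_eq, Fin.sum_univ_add]
  simp [Fin.append_left, Fin.append_right]


/-- If a framework `(G, p̂)` in `ℝ^D` is universally rigid, then its orthogonal projection onto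
the coordinate subspace `ℝ^d` (`d ≤ D`) is universally rigid in `ℝ^d`. -/
theorem universallyRigid_of_projection {V : Type*} {d D : ℕ} (h : d ≤ D) (G : SimpleGraph V)
    (phat : V → EuclideanSpace ℝ (Fin D)) (hUR : UniversallyRigid G phat) :
    UniversallyRigid G (fun i => proj h (phat i)) := by
  intro D' hd' q hEq
  set tail : V → Fin (D - d) → ℝ :=
    fun i k => phat i (Fin.cast (Nat.add_sub_cancel' h) (Fin.natAdd d k)) with htail
  set q' : V → EuclideanSpace ℝ (Fin (D' + (D - d))) :=
    fun i => WithLp.toLp 2 (Fin.append (q i) (tail i)) with hq'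
  have hq'dist : ∀ i j, dist (q' i) (q' j) ^ 2
      = dist (q i) (q j) ^ 2 + ∑ k, (tail i k - tail j k) ^ 2 :=
    fun i j => dist_append (q i) (q j) (tail i) (tail j)
  have hphatdist : ∀ i j, dist (phat i) (phat j) ^ 2
      = dist (proj h (phat i)) (proj h (phat j)) ^ 2 + ∑ k, (tail i k - tail j k) ^ 2 :=
    fun i j => dist_split h (phat i) (phat j)
  have hEq' : FrameworkEquiv G phat q' := by
    intro i j hadj
    have hsq : dist (phat i) (phat j) ^ 2 = dist (q' i) (q' j) ^ 2 := by
      rw [hphatdist, hq'dist, hEq i j hadj]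
    have := hsq
    nlinarith [dist_nonneg (x := phat i) (y := phat j), dist_nonneg (x := q' i) (y := q' j)]
  have hCong := hUR (D' + (D - d)) (by omega) q' hEq'
  intro i j
  have hsq : dist (proj h (phat i)) (proj h (phat j)) ^ 2 = dist (q i) (q j) ^ 2 := by
    have h1 := hphatdist i j
    have h2 := hq'dist i j
    have h3 : dist (phat i) (phat j) ^ 2 = dist (q' i) (q' j) ^ 2 := by rw [hCong i j]
    linarith
  nlinarith [dist_nonneg (x := proj h (phat i)) (y := proj h (phat j)),
    dist_nonneg (x := q i) (y := q j)]
end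

section
/- Universal rigidity is invariant under arbitrary (possibly singular) affine transformations: if (G, p) is a universally rigid framework in ℝ^d and A : ℝ^d → ℝ^d is an affine map, then (G, A∘p) is universally rigid (in its affine span). -/
open Matrix in
lemma norm_sq_eq_dot {n : ℕ} (x : EuclideanSpace ℝ (Fin n)) :
    ‖x‖ ^ 2 = (WithLp.equiv 2 (Fin n → ℝ) x) ⬝ᵥ (WithLp.equiv 2 (Fin n → ℝ) x) := by
  rw [← real_inner_self_eq_norm_sq]
  simp [PiLp.inner_apply, dotProduct, RCLike.inner_apply, mul_comm, -real_inner_self_eq_norm_sq]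
  rw [EuclideanSpace.norm_sq_eq]
  simp [Real.norm_eq_abs, sq_abs, sq]

lemma dist_append_sq {m n : ℕ} (a b : Fin m → ℝ) (u w : Fin n → ℝ) :
    dist ((WithLp.equiv 2 (Fin (m+n) → ℝ)).symm (Fin.append a u))
         ((WithLp.equiv 2 (Fin (m+n) → ℝ)).symm (Fin.append b w)) ^ 2
      = dist ((WithLp.equiv 2 (Fin m → ℝ)).symm a) ((WithLp.equiv 2 (Fin m → ℝ)).symm b) ^ 2
      + dist ((WithLp.equiv 2 (Fin n → ℝ)).symm u) ((WithLp.equiv 2 (Fin n → ℝ)).symm w) ^ 2 := by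
  rw [EuclideanSpace.dist_eq, EuclideanSpace.dist_eq, EuclideanSpace.dist_eq,
    Real.sq_sqrt (by positivity), Real.sq_sqrt (by positivity), Real.sq_sqrt (by positivity),
    Fin.sum_univ_add]
  simp [Fin.append_left, Fin.append_right]

open Matrix in
lemma exists_compl_map {d : ℕ} (L : EuclideanSpace ℝ (Fin d) →ₗ[ℝ] EuclideanSpace ℝ (Fin d)) :
    ∃ (c : ℝ) (M : EuclideanSpace ℝ (Fin d) →ₗ[ℝ] EuclideanSpace ℝ (Fin d)), 0 < c ∧
      ∀ v, ‖L v‖ ^ 2 + ‖M v‖ ^ 2 = c ^ 2 * ‖v‖ ^ 2 := by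
  set Lc := LinearMap.toContinuousLinearMap L with hLc_def
  set c : ℝ := ‖Lc‖ + 1 with hc_def
  have hc : 0 < c := by positivity
  have hL : ∀ v, ‖L v‖ ≤ c * ‖v‖ := by
    intro v
    have h1 : ‖Lc v‖ ≤ ‖Lc‖ * ‖v‖ := Lc.le_opNorm v
    have h2 : ‖Lc v‖ = ‖L v‖ := rfl
    nlinarith [norm_nonneg v]
  set N : Matrix (Fin d) (Fin d) ℝ := Matrix.toEuclideanLin.symm (c⁻¹ • L) with hN_def
  have hNapp : ∀ v : EuclideanSpace ℝ (Fin d),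
      N *ᵥ (WithLp.equiv 2 (Fin d → ℝ) v) = WithLp.equiv 2 (Fin d → ℝ) ((c⁻¹ • L) v) := by
    intro v
    rw [← Matrix.ofLp_toEuclideanLin_apply, hN_def, LinearEquiv.apply_symm_apply]
    rfl
  set P : Matrix (Fin d) (Fin d) ℝ := 1 - Nᵀ * N with hP_def
  have hquad : ∀ x : Fin d → ℝ, x ⬝ᵥ (P *ᵥ x) = x ⬝ᵥ x - (N *ᵥ x) ⬝ᵥ (N *ᵥ x) := by
    intro x
    rw [hP_def, sub_mulVec, one_mulVec, dotProduct_sub, ← mulVec_mulVec,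
      dotProduct_mulVec, vecMul_transpose]
  have hNx_le : ∀ x : Fin d → ℝ, (N *ᵥ x) ⬝ᵥ (N *ᵥ x) ≤ x ⬝ᵥ x := by
    intro x
    set v : EuclideanSpace ℝ (Fin d) := (WithLp.equiv 2 (Fin d → ℝ)).symm x with hv
    have hx : WithLp.equiv 2 (Fin d → ℝ) v = x := rfl
    have h1 : (N *ᵥ x) ⬝ᵥ (N *ᵥ x) = ‖(c⁻¹ • L) v‖ ^ 2 := by
      rw [← hx, hNapp v, ← norm_sq_eq_dot]
    have h2 : x ⬝ᵥ x = ‖v‖ ^ 2 := by rw [← hx, ← norm_sq_eq_dot]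
    have h3 : ‖(c⁻¹ • L) v‖ = c⁻¹ * ‖L v‖ := by
      rw [LinearMap.smul_apply, norm_smul, Real.norm_eq_abs, abs_of_pos (by positivity)]
    have h4 := hL v
    rw [h1, h2, h3]
    have h5 : c⁻¹ * ‖L v‖ ≤ ‖v‖ := by
      rw [inv_mul_le_iff₀ hc]; linarith [hL v]
    exact pow_le_pow_left₀ (by positivity) h5 2
  have hH : P.IsHermitian := by
    have h1 : (Nᵀ * N).IsHermitian := by
      have := Matrix.isHermitian_conjTranspose_mul_self N
      simpa using this
    exact Matrix.IsHermitian.sub Matrix.isHermitian_one h1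
  have hP : P.PosSemidef := by
    refine Matrix.PosSemidef.of_dotProduct_mulVec_nonneg hH fun x => ?_
    rw [star_trivial, hquad]
    linarith [hNx_le x]
  set S := (open scoped MatrixOrder in CFC.sqrt P) with hS_def
  have hSS : S * S = P := by open scoped MatrixOrder in exact CFC.sqrt_mul_sqrt_self P hP.nonneg
  have hSH : S.IsHermitian := by open scoped MatrixOrder in exact (CFC.sqrt_nonneg P).posSemidef.1
  refine ⟨c, c • Matrix.toEuclideanLin S, hc, fun v => ?_⟩
  set x : Fin d → ℝ := WithLp.equiv 2 (Fin d → ℝ) v with hx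
  have hSapp : WithLp.equiv 2 (Fin d → ℝ) (Matrix.toEuclideanLin S v) = S *ᵥ x := rfl
  have h1 : ‖Matrix.toEuclideanLin S v‖ ^ 2 = (S *ᵥ x) ⬝ᵥ (S *ᵥ x) := by
    rw [norm_sq_eq_dot, hSapp]
  have hST : Sᵀ = S := by
    have := hSH.eq
    simpa using this
  have h2 : (S *ᵥ x) ⬝ᵥ (S *ᵥ x) = x ⬝ᵥ (P *ᵥ x) := by
    rw [← hSS, ← mulVec_mulVec, dotProduct_mulVec x,
      show x ᵥ* S = S *ᵥ x from by rw [← hST, vecMul_transpose, hST]]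
  have h3 : x ⬝ᵥ x = ‖v‖ ^ 2 := by rw [norm_sq_eq_dot]
  have h4 : (N *ᵥ x) ⬝ᵥ (N *ᵥ x) = (c⁻¹ * ‖L v‖) ^ 2 := by
    rw [hx, hNapp v, ← norm_sq_eq_dot, LinearMap.smul_apply, norm_smul,
      Real.norm_eq_abs, abs_of_pos (by positivity)]
  have h6 : ‖(c • Matrix.toEuclideanLin S) v‖ ^ 2 = c ^ 2 * (x ⬝ᵥ (P *ᵥ x)) := by
    rw [LinearMap.smul_apply, norm_smul, mul_pow, Real.norm_eq_abs, sq_abs, h1, h2]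
  rw [h6, hquad, h3, h4]
  field_simp
  ring




/-- Universal rigidity is invariant under arbitrary (possibly singular) affine transformations:
if `(G, p)` is universally rigid in `ℝ^d` and `A : ℝ^d → ℝ^d` is an affine map, then
`(G, A ∘ p)` is universally rigid. -/
theorem universallyRigid_affineMap {V : Type*} {d : ℕ} (G : SimpleGraph V)
    (p : V → EuclideanSpace ℝ (Fin d))
    (A : EuclideanSpace ℝ (Fin d) →ᵃ[ℝ] EuclideanSpace ℝ (Fin d))
    (hUR : UniversallyRigid G p) :
    UniversallyRigid G (fun i => A (p i)) := by
  obtain ⟨c, M, hc, hkey⟩ := exists_compl_map A.linear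
  intro D hD q hq
  -- distance formulas
  have hA : ∀ x y : EuclideanSpace ℝ (Fin d), dist (A x) (A y) = ‖A.linear (x - y)‖ := by
    intro x y
    have h := A.linearMap_vsub x y
    simp only [vsub_eq_sub] at h
    rw [dist_eq_norm, ← h]
  have hM : ∀ x y : EuclideanSpace ℝ (Fin d), dist (M x) (M y) = ‖M (x - y)‖ := by
    intro x y
    rw [dist_eq_norm, ← map_sub]
  set s : V → EuclideanSpace ℝ (Fin (D + d)) := fun i =>
    c⁻¹ • (WithLp.equiv 2 (Fin (D+d) → ℝ)).symm
      (Fin.append (WithLp.equiv 2 (Fin D → ℝ) (q i)) (WithLp.equiv 2 (Fin d → ℝ) (M (p i))))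
    with hs
  have hdist : ∀ i j, dist (s i) (s j) ^ 2
      = c⁻¹ ^ 2 * (dist (q i) (q j) ^ 2 + ‖M (p i - p j)‖ ^ 2) := by
    intro i j
    rw [hs]
    simp only
    rw [dist_smul₀, mul_pow, Real.norm_eq_abs, abs_of_pos (by positivity), dist_append_sq]
    simp only [Equiv.symm_apply_apply]
    rw [hM]
  -- s is equivalent to p
  have hequiv : ∀ i j, G.Adj i j → dist (p i) (p j) = dist (s i) (s j) := by
    intro i j hij
    have h1 : dist (s i) (s j) ^ 2 = dist (p i) (p j) ^ 2 := by
      rw [hdist i j, ← hq i j hij, hA, hkey (p i - p j), dist_eq_norm]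
      field_simp
    rw [← Real.sqrt_sq dist_nonneg, ← Real.sqrt_sq (dist_nonneg (x := s i) (y := s j)), h1]
  have hcong := hUR (D + d) (Nat.le_add_left d D) s hequiv
  intro i j
  have h2 : dist (q i) (q j) ^ 2 = dist (A (p i)) (A (p j)) ^ 2 := by
    have h3 := hcong i j
    have h4 : dist (s i) (s j) ^ 2 = dist (p i) (p j) ^ 2 := by rw [← h3]
    rw [hdist i j] at h4
    have h5 := hkey (p i - p j)
    rw [hA]
    have h8 : dist (p i) (p j) = ‖p i - p j‖ := dist_eq_norm _ _
    rw [h8] at h4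
    have h6 : dist (q i) (q j) ^ 2 + ‖M (p i - p j)‖ ^ 2 = c ^ 2 * ‖p i - p j‖ ^ 2 :=
      calc dist (q i) (q j) ^ 2 + ‖M (p i - p j)‖ ^ 2
          = c ^ 2 * (c⁻¹ ^ 2 * (dist (q i) (q j) ^ 2 + ‖M (p i - p j)‖ ^ 2)) := by
            field_simp
        _ = c ^ 2 * ‖p i - p j‖ ^ 2 := by rw [h4]
    linarith [h5, h6]
  rw [← Real.sqrt_sq dist_nonneg, ← Real.sqrt_sq (dist_nonneg (x := q i) (y := q j)), h2]
end

section
/- Suppose frameworks (G, q) in ℝ^d and (G, p) in ℝ^D, with p affinely spanning ℝ^D, both satisfy the equilibrium stress ω, and the stress matrix Ω(ω) has rank n − D − 1 (where n is the number of vertices). Then q is an affine image of p: there is an affine map A : ℝ^D → ℝ^d with q_i = A(p_i) for all i. -/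
/-- The stress matrix of a stress `ω`: off-diagonal entries `−ω i j`, diagonal entries
`∑ j, ω i j`. -/
def stressMatrix {n : ℕ} (ω : Fin n → Fin n → ℝ) : Matrix (Fin n) (Fin n) ℝ :=
  Matrix.of fun i j => if i = j then ∑ k, ω i k else -ω i j

/-- If frameworks `(G, q)` in `ℝ^d` and `(G, p)` in `ℝ^D`, with `p` affinely spanning `ℝ^D`,
both satisfy the equilibrium stress `ω`, and the stress matrix `Ω(ω)` has rank `n − D − 1`,
then `q` is an affine image of `p`. -/
theorem affine_image_of_universal_stress {n d D : ℕ} (G : SimpleGraph (Fin n))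
    (p : Fin n → EuclideanSpace ℝ (Fin D)) (q : Fin n → EuclideanSpace ℝ (Fin d))
    (ω : Fin n → Fin n → ℝ)
    (hsym : ∀ i j, ω i j = ω j i) (hsupp : ∀ i j, ¬ G.Adj i j → ω i j = 0)
    (hspan : affineSpan ℝ (Set.range p) = ⊤)
    (hp : ∀ i, ∑ j, ω i j • (p i - p j) = 0)
    (hq : ∀ i, ∑ j, ω i j • (q i - q j) = 0)
    (hrank : (stressMatrix ω).rank = n - D - 1) :
    ∃ A : EuclideanSpace ℝ (Fin D) →ᵃ[ℝ] EuclideanSpace ℝ (Fin d), ∀ i, q i = A (p i) := by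
  classical
  have hωdiag : ∀ i, ω i i = 0 := fun i => hsupp i i G.irrefl
  set M := stressMatrix ω with hM
  -- The action of the stress matrix on a vector
  have hmul : ∀ (v : Fin n → ℝ) (i : Fin n),
      M.mulVec v i = ∑ j, ω i j * (v i - v j) := by
    intro v i
    have hentry : ∀ j, M i j = (if i = j then ∑ k, ω i k else 0) - ω i j := by
      intro j
      by_cases h : i = j
      · subst h; simp [hM, stressMatrix, hωdiag i]
      · simp [hM, stressMatrix, h]
    calc M.mulVec v i = ∑ j, M i j * v j := rfl
      _ = ∑ j, ((if i = j then ∑ k, ω i k else 0) - ω i j) * v j := by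
          simp only [hentry]
      _ = ∑ j, ω i j * (v i - v j) := by
          simp only [sub_mul, mul_sub, Finset.sum_sub_distrib, ite_mul, zero_mul,
            Finset.sum_ite_eq, Finset.mem_univ, if_true, ← Finset.sum_mul]
  have hker_of : ∀ (E : ℕ) (r : Fin n → EuclideanSpace ℝ (Fin E)),
      (∀ i, ∑ j, ω i j • (r i - r j) = 0) →
      ∀ ℓ : Fin E, M.mulVec (fun i => r i ℓ) = 0 := by
    intro E r hr ℓ
    funext i
    have h0 := congrArg (EuclideanSpace.proj (𝕜 := ℝ) ℓ) (hr i)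
    simp only [map_sum, map_smul, map_sub, map_zero, PiLp.proj_apply,
      smul_eq_mul] at h0
    simpa [hmul] using h0
  have hker1 : M.mulVec (fun _ => (1 : ℝ)) = 0 := by
    funext i; simp [hmul]
  set K := LinearMap.ker M.mulVecLin with hK
  -- The affine-coordinates map
  set T : ((Fin D → ℝ) × ℝ) →ₗ[ℝ] (Fin n → ℝ) :=
    { toFun := fun ct => fun i => (∑ ℓ, ct.1 ℓ * p i ℓ) + ct.2
      map_add' := by
        intro a b; funext i
        simp [add_mul, Finset.sum_add_distrib]; ring
      map_smul' := by
        intro a b; funext i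
        simp [Finset.mul_sum, mul_add, mul_assoc] } with hT
  set S := LinearMap.range T with hS
  have hSK : S ≤ K := by
    rintro x ⟨⟨c, t⟩, rfl⟩
    have hx : T (c, t) = (∑ ℓ, c ℓ • fun i => p i ℓ) + t • (fun _ => (1 : ℝ)) := by
      funext i; simp [hT, Finset.sum_apply]
    rw [hx]
    refine K.add_mem (Submodule.sum_mem _ fun ℓ _ => K.smul_mem _ ?_) (K.smul_mem _ ?_)
    · exact LinearMap.mem_ker.2 (by simpa [Matrix.mulVecLin_apply] using hker_of D p hp ℓ)
    · exact LinearMap.mem_ker.2 (by simpa [Matrix.mulVecLin_apply] using hker1)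
  -- injectivity of T, from the affine spanning hypothesis
  have hTinj : Function.Injective T := by
    rw [← LinearMap.ker_eq_bot, LinearMap.ker_eq_bot']
    rintro ⟨c, t⟩ h0
    set L : EuclideanSpace ℝ (Fin D) →ₗ[ℝ] ℝ :=
      ∑ ℓ, c ℓ • (EuclideanSpace.proj ℓ : EuclideanSpace ℝ (Fin D) →L[ℝ] ℝ).toLinearMap
      with hL
    have hLval : ∀ x : EuclideanSpace ℝ (Fin D), L x = ∑ ℓ, c ℓ * x ℓ := by
      intro x; simp [hL, LinearMap.sum_apply]
    set f : EuclideanSpace ℝ (Fin D) →ᵃ[ℝ] ℝ :=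
      L.toAffineMap + AffineMap.const ℝ (EuclideanSpace ℝ (Fin D)) t with hf
    have hfval : ∀ x, f x = (∑ ℓ, c ℓ * x ℓ) + t := by
      intro x; simp [hf, hLval]
    have hzero : ∀ x, f x = 0 := by
      have hle : affineSpan ℝ (Set.range p) ≤
          AffineSubspace.comap f (⊥ : Submodule ℝ ℝ).toAffineSubspace := by
        rw [affineSpan_le]
        rintro - ⟨i, rfl⟩
        simp only [SetLike.mem_coe, AffineSubspace.mem_comap,
          Submodule.mem_toAffineSubspace, Submodule.mem_bot]
        rw [hfval]
        exact congrFun h0 i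
      rw [hspan] at hle
      intro x
      have := hle (AffineSubspace.mem_top ℝ _ x)
      simpa [AffineSubspace.mem_comap, Submodule.mem_toAffineSubspace] using this
    have ht : t = 0 := by simpa [hfval] using hzero 0
    have hc : ∀ ℓ, c ℓ = 0 := by
      intro ℓ
      have := hzero (EuclideanSpace.single ℓ 1)
      rw [hfval, ht] at this
      simpa [EuclideanSpace.single_apply, Finset.sum_ite_eq] using this
    ext ℓ
    · exact hc ℓ
    · exact ht
  have hfinS : Module.finrank ℝ S = D + 1 := by
    rw [hS, LinearMap.finrank_range_of_inj hTinj]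
    simp [Module.finrank_prod]
  have hDn : D + 1 ≤ n := by
    have := Submodule.finrank_le S
    rwa [hfinS, Module.finrank_fin_fun] at this
  have hfinK : Module.finrank ℝ K = D + 1 := by
    have hrn := LinearMap.finrank_range_add_finrank_ker M.mulVecLin
    rw [Module.finrank_fin_fun] at hrn
    have : M.rank + Module.finrank ℝ K = n := hrn
    rw [hrank] at this
    omega
  have hSeqK : S = K :=
    Submodule.eq_of_le_of_finrank_le hSK (by rw [hfinS, hfinK])
  -- each coordinate of q lies in K = S
  have hqS : ∀ m : Fin d, ∃ ct : (Fin D → ℝ) × ℝ,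
      ∀ i, q i m = (∑ ℓ, ct.1 ℓ * p i ℓ) + ct.2 := by
    intro m
    have hmem : (fun i => q i m) ∈ S := by
      rw [hSeqK]
      exact LinearMap.mem_ker.2 (by simpa [Matrix.mulVecLin_apply] using hker_of d q hq m)
    obtain ⟨ct, hct⟩ := hmem
    exact ⟨ct, fun i => (congrFun hct i).symm⟩
  choose ct hct using hqS
  -- assemble the affine map
  set L2 : EuclideanSpace ℝ (Fin D) →ₗ[ℝ] EuclideanSpace ℝ (Fin d) :=
    Matrix.toEuclideanLin (Matrix.of fun m ℓ => (ct m).1 ℓ) with hL2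
  set b : EuclideanSpace ℝ (Fin d) := (WithLp.equiv 2 _).symm (fun m => (ct m).2) with hb
  refine ⟨L2.toAffineMap + AffineMap.const ℝ (EuclideanSpace ℝ (Fin D)) b, fun i => ?_⟩
  ext m
  have : (L2 (p i)) m = ∑ ℓ, (ct m).1 ℓ * p i ℓ := by
    simp [hL2, Matrix.toEuclideanLin_apply, Matrix.mulVec, dotProduct]
  show q i m = L2 (p i) m + b m
  rw [this, hct m i]
  rfl
end

section
/- If (G, p) is a framework in ℝ^d admitting an equilibrium stress ω whose stress matrix Ω(ω) is positive semidefinite of rank n − d − 1, and q is any configuration in ℝ^D equivalent to p (same edge lengths), then ω is also an equilibrium stress for (G, q). -/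
/-- If `(G, p)` in `ℝ^d` has an equilibrium stress `ω` whose stress matrix is positive
semidefinite of rank `n − d − 1`, then `ω` is also an equilibrium stress for any configuration
`q` in `ℝ^D` with the same edge lengths. -/
theorem equilibrium_stress_of_equivalent {n d D : ℕ} (G : SimpleGraph (Fin n))
    (p : Fin n → EuclideanSpace ℝ (Fin d)) (q : Fin n → EuclideanSpace ℝ (Fin D))
    (ω : Fin n → Fin n → ℝ)
    (hsym : ∀ i j, ω i j = ω j i) (hsupp : ∀ i j, ¬ G.Adj i j → ω i j = 0)
    (hequil : ∀ i, ∑ j, ω i j • (p i - p j) = 0)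
    (hpsd : (stressMatrix ω).PosSemidef)
    (hrank : (stressMatrix ω).rank = n - d - 1)
    (hequiv : ∀ i j, G.Adj i j → dist (q i) (q j) = dist (p i) (p j)) :
    ∀ i, ∑ j, ω i j • (q i - q j) = 0 := by
  have hω0 : ∀ i, ω i i = 0 := fun i => hsupp i i (G.irrefl)
  -- mulVec formula
  have hmv : ∀ (x : Fin n → ℝ) i, ((stressMatrix ω).mulVec x) i = ∑ j, ω i j * (x i - x j) := by
    intro x i
    simp only [Matrix.mulVec, dotProduct, stressMatrix, Matrix.of_apply]
    have h1 : ∀ j : Fin n, (if i = j then ∑ k, ω i k else -ω i j) * x j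
        = (if i = j then (∑ k, ω i k) * x i else 0) - ω i j * x j := by
      intro j
      by_cases h : i = j
      · subst h; simp [hω0 i]
      · simp [h]
    rw [Finset.sum_congr rfl fun j _ => h1 j, Finset.sum_sub_distrib,
      Finset.sum_ite_eq Finset.univ i fun _ => (∑ k, ω i k) * x i]
    simp [mul_sub, Finset.sum_sub_distrib, Finset.sum_mul]
  -- quadratic form formula
  have hquad : ∀ (x : Fin n → ℝ),
      dotProduct x ((stressMatrix ω).mulVec x) = (∑ i, ∑ j, ω i j * (x i - x j) ^ 2) / 2 := by
    intro x
    have hA : dotProduct x ((stressMatrix ω).mulVec x) = ∑ i, ∑ j, ω i j * (x i * (x i - x j)) := by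
      simp only [dotProduct, hmv, Finset.mul_sum]
      exact Finset.sum_congr rfl fun i _ => Finset.sum_congr rfl fun j _ => by ring
    have hB : ∑ i, ∑ j, ω i j * (x j * (x j - x i))
        = ∑ i, ∑ j, ω i j * (x i * (x i - x j)) := by
      rw [Finset.sum_comm]
      exact Finset.sum_congr rfl fun i _ => Finset.sum_congr rfl fun j _ => by rw [hsym]
    have hsum : ∑ i, ∑ j, ω i j * (x i - x j) ^ 2
        = (∑ i, ∑ j, ω i j * (x i * (x i - x j))) + ∑ i, ∑ j, ω i j * (x j * (x j - x i)) := by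
      rw [← Finset.sum_add_distrib]
      refine Finset.sum_congr rfl fun i _ => ?_
      rw [← Finset.sum_add_distrib]
      exact Finset.sum_congr rfl fun j _ => by ring
    rw [hA]
    rw [hB] at hsum
    linarith
  -- distance squared as coordinate sums
  have hdq : ∀ a b : EuclideanSpace ℝ (Fin D), dist a b ^ 2 = ∑ k, (a k - b k) ^ 2 := by
    intro a b
    rw [EuclideanSpace.dist_eq, Real.sq_sqrt (by positivity)]
    exact Finset.sum_congr rfl fun k _ => by rw [Real.dist_eq, sq_abs]
  have hdp : ∀ a b : EuclideanSpace ℝ (Fin d), dist a b ^ 2 = ∑ k, (a k - b k) ^ 2 := by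
    intro a b
    rw [EuclideanSpace.dist_eq, Real.sq_sqrt (by positivity)]
    exact Finset.sum_congr rfl fun k _ => by rw [Real.dist_eq, sq_abs]
  -- p coordinates are in kernel
  have hpk : ∀ k : Fin d, (stressMatrix ω).mulVec (fun i => p i k) = 0 := by
    intro k
    funext i
    have h := congrArg (EuclideanSpace.proj k) (hequil i)
    rw [map_sum, map_zero] at h
    simp only [map_smul, PiLp.proj_apply, smul_eq_mul, PiLp.sub_apply] at h
    rw [Pi.zero_apply, hmv]
    exact h
  -- energies equal
  have hE : ∑ i, ∑ j, ω i j * dist (q i) (q j) ^ 2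
      = ∑ i, ∑ j, ω i j * dist (p i) (p j) ^ 2 := by
    refine Finset.sum_congr rfl fun i _ => Finset.sum_congr rfl fun j _ => ?_
    by_cases h : G.Adj i j
    · rw [hequiv i j h]
    · rw [hsupp i j h]; ring
  -- total energy of q equals sum of coordinate quadratic forms
  have hEq : ∑ k : Fin D, dotProduct (fun i => q i k) ((stressMatrix ω).mulVec fun i => q i k)
      = (∑ i, ∑ j, ω i j * dist (q i) (q j) ^ 2) / 2 := by
    simp only [hquad, ← Finset.sum_div]
    congr 1
    rw [Finset.sum_comm]
    refine Finset.sum_congr rfl fun i _ => ?_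
    rw [Finset.sum_comm]
    refine Finset.sum_congr rfl fun j _ => ?_
    rw [hdq, Finset.mul_sum]
  have hEp : (∑ i, ∑ j, ω i j * dist (p i) (p j) ^ 2) = 0 := by
    have : ∑ k : Fin d, dotProduct (fun i => p i k) ((stressMatrix ω).mulVec fun i => p i k)
        = (∑ i, ∑ j, ω i j * dist (p i) (p j) ^ 2) / 2 := by
      simp only [hquad, ← Finset.sum_div]
      congr 1
      rw [Finset.sum_comm]
      refine Finset.sum_congr rfl fun i _ => ?_
      rw [Finset.sum_comm]
      refine Finset.sum_congr rfl fun j _ => ?_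
      rw [hdp, Finset.mul_sum]
    simp only [hpk, dotProduct_zero, Finset.sum_const, smul_zero] at this
    linarith
  -- each q coordinate quadratic form is zero
  have hnonneg : ∀ k : Fin D, 0 ≤ dotProduct (fun i => q i k) ((stressMatrix ω).mulVec fun i => q i k) := by
    intro k
    simpa using hpsd.dotProduct_mulVec_nonneg fun i => q i k
  have hsumzero : ∑ k : Fin D, dotProduct (fun i => q i k) ((stressMatrix ω).mulVec fun i => q i k) = 0 := by
    rw [hEq, hE, hEp]; norm_num
  have hqk : ∀ k : Fin D, (stressMatrix ω).mulVec (fun i => q i k) = 0 := by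
    intro k
    have hz := (Finset.sum_eq_zero_iff_of_nonneg fun k _ => hnonneg k).mp hsumzero k
      (Finset.mem_univ k)
    have := (hpsd.dotProduct_mulVec_zero_iff fun i => q i k).mp (by simpa using hz)
    exact this
  intro i
  have hk : ∀ k : Fin D, EuclideanSpace.proj k (∑ j, ω i j • (q i - q j)) = 0 := by
    intro k
    have h := congrFun (hqk k) i
    rw [hmv] at h
    rw [map_sum]
    simp only [map_smul, PiLp.proj_apply, smul_eq_mul, PiLp.sub_apply]
    exact h
  ext k
  exact hk k
end
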